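/- Let S be a finite sample of labeled examples of a total Boolean function f on {0,1}^n with DNF size s, and suppose every partial function obtained from f^S by deleting (making undefined) some subset of positive examples, while retaining at least one positive example, has a seed of size at most q. Then the seed covering method produces a DNF formula consistent with S having fewer than (2n+1)^q + 1 terms. In particular, if f has DNF size greater than (2n+1)^q, then some such partial function has no seed of size at most q. -/

import Mathlib

/-- `x` satisfies every literal in the monomial `T`. -/
def covers {n : ℕ} (T : Finset (Fin n × Bool)) (x : Fin n → Bool) : Prop :=
  ∀ l ∈ T, x l.1 = l.2

/-- A DNF formula (finite set of terms) evaluates to true on `x`. -/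
def DNFeval {n : ℕ} (φ : Finset (Finset (Fin n × Bool))) (x : Fin n → Bool) : Prop :=
  ∃ T ∈ φ, covers T x

/-- The DNF `φ` is consistent with the partial function `g`. -/
def consistentDNF {n : ℕ} (φ : Finset (Finset (Fin n × Bool)))
    (g : (Fin n → Bool) → Option Bool) : Prop :=
  ∀ x, (g x = some true → DNFeval φ x) ∧ (g x = some false → ¬ DNFeval φ x)

/-- `g` has a seed of size at most `q`: a monomial `T` with at most `q` literals
covering a positive example of `g`, such that the projection `g_T` is consistent with
a monomial. -/
def hasSeed {n : ℕ} (g : (Fin n → Bool) → Option Bool) (q : ℕ) : Prop :=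
  ∃ T : Finset (Fin n × Bool), T.card ≤ q ∧
    (∃ x, covers T x ∧ g x = some true) ∧
    (∃ M : Finset (Fin n × Bool), ∀ x, covers T x →
      (g x = some true → covers M x) ∧ (g x = some false → ¬ covers M x))

/-- `F'` is obtained from `F` by deleting (making undefined) a subset of the positive
examples. -/
def posDeletion {n : ℕ} (F F' : (Fin n → Bool) → Option Bool) : Prop :=
  ∀ x, F' x = F x ∨ (F x = some true ∧ F' x = none)

lemma card_small_finsets_le {α : Type*} [Fintype α] [LinearOrder α] (q : ℕ) :
    (Finset.univ.filter fun T : Finset α => T.card ≤ q).card ≤ (Fintype.card α + 1) ^ q := by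
  classical
  have h := Finset.card_le_card_of_injOn
    (f := fun (T : Finset α) (i : Fin q) => (T.sort (· ≤ ·))[(i : ℕ)]?)
    (s := Finset.univ.filter fun T : Finset α => T.card ≤ q)
    (t := (Finset.univ : Finset (Fin q → Option α)))
    (fun _ _ => Finset.mem_univ _)
    (by
      intro T1 h1 T2 h2 heq
      replace h1 := (Finset.mem_filter.1 h1).2; replace h2 := (Finset.mem_filter.1 h2).2
      have hl : T1.sort (· ≤ ·) = T2.sort (· ≤ ·) := by
        apply List.ext_getElem?
        intro m
        by_cases hm : m < q
        · exact congrFun heq ⟨m, hm⟩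
        · rw [List.getElem?_eq_none_iff.2, List.getElem?_eq_none_iff.2] <;>
            simp [Finset.length_sort] <;> omega
      have := congrArg List.toFinset hl
      rwa [Finset.sort_toFinset, Finset.sort_toFinset] at this)
  calc (Finset.univ.filter fun T : Finset α => T.card ≤ q).card
      ≤ (Finset.univ : Finset (Fin q → Option α)).card := h
    _ = (Fintype.card α + 1) ^ q := by simp [Finset.card_univ, Fintype.card_fun]

open Classical in
/-- Seeds available for the remaining positive set `P`. -/
noncomputable def seeds {n : ℕ} (q : ℕ) (P : Finset (Fin n → Bool)) :
    Finset (Finset (Fin n × Bool)) :=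
  Finset.univ.filter fun T : Finset (Fin n × Bool) => T.card ≤ q ∧ ∃ x ∈ P, covers T x

/-- Extract a seed for the remaining positive set `P`. -/
lemma seed_extract {n q : ℕ} (F : (Fin n → Bool) → Option Bool)
    (hseed : ∀ F' : (Fin n → Bool) → Option Bool,
      posDeletion F F' → (∃ x, F' x = some true) → hasSeed F' q)
    (P : Finset (Fin n → Bool)) (hP : ∀ x ∈ P, F x = some true) (hne : P.Nonempty) :
    ∃ T : Finset (Fin n × Bool), T.card ≤ q ∧ (∃ x₀ ∈ P, covers T x₀) ∧
      ∃ M : Finset (Fin n × Bool),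
        (∀ y ∈ P, covers T y → covers M y) ∧
        (∀ z, F z = some false → covers T z → ¬ covers M z) := by
  classical
  set F' : (Fin n → Bool) → Option Bool :=
    fun x => if x ∈ P then some true else (if F x = some true then none else F x) with hF'
  have hdel : posDeletion F F' := by
    intro x
    by_cases hx : x ∈ P
    · left; simp [hF', hx, hP x hx]
    · by_cases ht : F x = some true
      · right; exact ⟨ht, by simp [hF', hx, ht]⟩
      · left; simp [hF', hx, ht]
  have hpos : ∀ x, F' x = some true ↔ x ∈ P := by
    intro x
    constructor
    · intro h
      by_contra hx
      by_cases ht : F x = some true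
      · simp [hF', hx, ht] at h
      · simp [hF', hx, ht] at h
    · intro hx; simp [hF', hx]
  obtain ⟨x₁, hx₁⟩ := hne
  obtain ⟨T, hTcard, ⟨x₀, hx₀T, hx₀⟩, M, hM⟩ :=
    hseed F' hdel ⟨x₁, (hpos x₁).2 hx₁⟩
  refine ⟨T, hTcard, ⟨x₀, (hpos x₀).1 hx₀, hx₀T⟩, M, ?_, ?_⟩
  · intro y hy hyT
    exact (hM y hyT).1 ((hpos y).2 hy)
  · intro z hz hzT
    have hzP : z ∉ P := fun h => by simp [hP z h] at hz
    have hzt : F z ≠ some true := by simp [hz]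
    have : F' z = some false := by simp [hF', hzP, hzt, hz]
    exact (hM z hzT).2 this

lemma cover_aux {n q : ℕ} (F : (Fin n → Bool) → Option Bool)
    (hseed : ∀ F' : (Fin n → Bool) → Option Bool,
      posDeletion F F' → (∃ x, F' x = some true) → hasSeed F' q) :
    ∀ k (P : Finset (Fin n → Bool)), (∀ x ∈ P, F x = some true) →
      (seeds q P).card ≤ k →
      ∃ φ : Finset (Finset (Fin n × Bool)), φ.card ≤ k ∧
        (∀ x ∈ P, DNFeval φ x) ∧ (∀ x, F x = some false → ¬ DNFeval φ x) := by
  classical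
  intro k
  induction k with
  | zero =>
    intro P hP hcard
    rcases P.eq_empty_or_nonempty with rfl | hne
    · exact ⟨∅, by simp, by simp, by simp [DNFeval]⟩
    · exfalso
      obtain ⟨T, hTcard, ⟨x₀, hx₀P, hx₀T⟩, -⟩ := seed_extract F hseed P hP hne
      have : T ∈ seeds q P := by
        simp only [seeds, Finset.mem_filter, Finset.mem_univ, true_and]
        exact ⟨hTcard, x₀, hx₀P, hx₀T⟩
      have := Finset.card_pos.2 ⟨T, this⟩
      omega
  | succ k ih =>
    intro P hP hcard
    rcases P.eq_empty_or_nonempty with rfl | hne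
    · exact ⟨∅, by simp, by simp, by simp [DNFeval]⟩
    obtain ⟨T, hTcard, ⟨x₀, hx₀P, hx₀T⟩, M, hMpos, hMneg⟩ := seed_extract F hseed P hP hne
    have hTseed : T ∈ seeds q P := by
      simp only [seeds, Finset.mem_filter, Finset.mem_univ, true_and]
      exact ⟨hTcard, x₀, hx₀P, hx₀T⟩
    -- the term added to the DNF
    set T' : Finset (Fin n × Bool) :=
      Finset.univ.filter (fun l : Fin n × Bool => ∀ y ∈ P, covers T y → y l.1 = l.2) with hT'
    have hTsub : T ⊆ T' := by
      intro l hl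
      simp only [hT', Finset.mem_filter, Finset.mem_univ, true_and]
      exact fun y _ hyT => hyT l hl
    have hMsub : M ⊆ T' := by
      intro l hl
      simp only [hT', Finset.mem_filter, Finset.mem_univ, true_and]
      exact fun y hy hyT => hMpos y hy hyT l hl
    have hPcov : ∀ y ∈ P, covers T y → covers T' y := by
      intro y hy hyT l hl
      exact (Finset.mem_filter.1 hl).2 y hy hyT
    have hT'neg : ∀ z, F z = some false → ¬ covers T' z := by
      intro z hz hzT'
      exact hMneg z hz (fun l hl => hzT' l (hTsub hl)) (fun l hl => hzT' l (hMsub hl))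
    set P' : Finset (Fin n → Bool) := P.filter (fun y => ¬ covers T' y) with hP'
    have hP'sub : P' ⊆ P := Finset.filter_subset _ _
    have hseedsub : seeds q P' ⊆ (seeds q P).erase T := by
      intro T2 hT2
      simp only [seeds, Finset.mem_filter, Finset.mem_univ, true_and] at hT2
      obtain ⟨hT2c, y, hyP', hyT2⟩ := hT2
      have hyP : y ∈ P := hP'sub hyP'
      refine Finset.mem_erase.2 ⟨?_, ?_⟩
      · rintro rfl
        exact (Finset.mem_filter.1 hyP').2 (hPcov y hyP hyT2)
      · simp only [seeds, Finset.mem_filter, Finset.mem_univ, true_and]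
        exact ⟨hT2c, y, hyP, hyT2⟩
    have hcard' : (seeds q P').card ≤ k := by
      have h1 := Finset.card_le_card hseedsub
      rw [Finset.card_erase_of_mem hTseed] at h1
      have := Finset.card_pos.2 ⟨T, hTseed⟩
      omega
    obtain ⟨φ', hφ'card, hφ'pos, hφ'neg⟩ := ih P' (fun x hx => hP x (hP'sub hx)) hcard'
    refine ⟨insert T' φ', ?_, ?_, ?_⟩
    · calc (insert T' φ').card ≤ φ'.card + 1 := Finset.card_insert_le _ _
        _ ≤ k + 1 := by omega
    · intro x hx
      by_cases hxT' : covers T' x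
      · exact ⟨T', Finset.mem_insert_self _ _, hxT'⟩
      · obtain ⟨T2, hT2, hc⟩ := hφ'pos x (Finset.mem_filter.2 ⟨hx, hxT'⟩)
        exact ⟨T2, Finset.mem_insert_of_mem hT2, hc⟩
    · rintro x hx ⟨T2, hT2, hc⟩
      rcases Finset.mem_insert.1 hT2 with rfl | hT2'
      · exact hT'neg x hx hc
      · exact hφ'neg x hx ⟨T2, hT2', hc⟩

/-- Let `F = f^S` be the partial function given by a sample `S` of a Boolean function.
If every partial function obtained from `F` by deleting some subset of its positive
examples, while retaining at least one positive example, has a seed of size at most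
`q`, then (as produced by the seed covering method, which uses each of the at most
`(2n+1)^q` possible seeds at most once) there is a DNF formula consistent with `F`
having fewer than `(2n+1)^q + 1` terms.  In particular, if every DNF consistent with
`F` needs more than `(2n+1)^q` terms, then some such partial function has no seed of
size at most `q`. -/
theorem stmt19 {n q : ℕ} (F : (Fin n → Bool) → Option Bool)
    (hseed : ∀ F' : (Fin n → Bool) → Option Bool,
      posDeletion F F' → (∃ x, F' x = some true) → hasSeed F' q) :
    ∃ φ : Finset (Finset (Fin n × Bool)),
      φ.card < (2 * n + 1) ^ q + 1 ∧ consistentDNF φ F := by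
  classical
  set P : Finset (Fin n → Bool) := Finset.univ.filter (fun x => F x = some true) with hPdef
  have hP : ∀ x ∈ P, F x = some true := fun x hx => (Finset.mem_filter.1 hx).2
  letI : LinearOrder (Fin n × Bool) :=
    LinearOrder.lift' (fun p => (Fintype.equivFin (Fin n × Bool)) p) (Equiv.injective _)
  have hcard : (seeds q P).card ≤ (2 * n + 1) ^ q := by
    have hsub : seeds q P ⊆ Finset.univ.filter fun T : Finset (Fin n × Bool) => T.card ≤ q := by
      intro T hT
      simp only [seeds, Finset.mem_filter, Finset.mem_univ, true_and] at hT ⊢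
      exact hT.1
    have h1 := Finset.card_le_card hsub
    have h2 := card_small_finsets_le (α := Fin n × Bool) q
    have h3 : Fintype.card (Fin n × Bool) = 2 * n := by
      simp [Fintype.card_prod, mul_comm]
    rw [h3] at h2
    omega
  obtain ⟨φ, hφcard, hφpos, hφneg⟩ := cover_aux F hseed ((2 * n + 1) ^ q) P hP hcard
  refine ⟨φ, by omega, fun x => ⟨?_, hφneg x⟩⟩
  intro hx
  exact hφpos x (Finset.mem_filter.2 ⟨Finset.mem_univ _, hx⟩)
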